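/- arXiv:1909.03174 — 5 statements merged into one kernel-verified Lean document; each statement's English description precedes it below -/
import Mathlib

section
/- The quotient ring (F_q[u]/(u^e))[x]/(f(x)), where f(x) is a monic polynomial of degree m over F_q[u]/(u^e) whose reduction mod u is irreducible over F_q, is isomorphic as a ring to F_{q^m}[u]/(u^e). -/
open Polynomial

/-- `(F_q[u]/(u^e))[x]/(f(x))`, with `f` monic of degree `m` over
`R = F_q[u]/(u^e)` whose reduction mod `u` is irreducible over `F_q`, is isomorphic
as a ring to `F_{q^m}[u]/(u^e)`.  Here `π : R → F_q` is the residue map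
(characterized by `π(u) = 0` and `π ∘ (algebraMap F_q R) = id`). -/
theorem stmt_1 (p q e m : ℕ) (hp : p.Prime) (hq : ∃ k : ℕ, 1 ≤ k ∧ q = p ^ k)
    (he : 1 ≤ e) (hm : 1 ≤ m)
    (F Fm : Type*) [Field F] [Fintype F] [Field Fm] [Fintype Fm]
    (hcardF : Fintype.card F = q) (hcardFm : Fintype.card Fm = q ^ m)
    (π : AdjoinRoot ((X : Polynomial F) ^ e) →+* F)
    (hπ0 : π (AdjoinRoot.root ((X : Polynomial F) ^ e)) = 0)
    (hπa : ∀ a : F, π (algebraMap F (AdjoinRoot ((X : Polynomial F) ^ e)) a) = a)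
    (f : Polynomial (AdjoinRoot ((X : Polynomial F) ^ e)))
    (hmonic : f.Monic) (hdeg : f.natDegree = m)
    (hirr : Irreducible (f.map π)) :
    Nonempty (AdjoinRoot f ≃+* AdjoinRoot ((X : Polynomial Fm) ^ e)) := by
  classical
  obtain ⟨k, hk1, hqpk⟩ := hq
  haveI hfactp : Fact p.Prime := ⟨hp⟩
  -- Notation
  set R : Type _ := AdjoinRoot ((X : Polynomial F) ^ e) with hRdef
  set S : Type _ := AdjoinRoot f with hSdef
  set u' : R := AdjoinRoot.root ((X : Polynomial F) ^ e) with hu'def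
  set g : Polynomial F := f.map π with hgdef
  haveI : Fact (Irreducible g) := ⟨hirr⟩
  set K : Type _ := AdjoinRoot g with hKdef
  -- basic numerics
  have hq2 : 2 ≤ q := by
    rw [hqpk]
    calc 2 ≤ p := hp.two_le
    _ = p ^ 1 := (pow_one p).symm
    _ ≤ p ^ k := Nat.pow_le_pow_right hp.pos hk1
  have hqm2 : 2 ≤ q ^ m := le_trans hq2 (Nat.le_self_pow (by omega) q)
  -- monicity facts
  have hmonX : ((X : Polynomial F) ^ e).Monic := monic_X_pow e
  have hmonXm : ((X : Polynomial Fm) ^ e).Monic := monic_X_pow e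
  have hgmonic : g.Monic := hmonic.map π
  have hgdeg : g.natDegree = m := by rw [hgdef, hmonic.natDegree_map, hdeg]
  -- power bases and cardinalities
  let pbR := AdjoinRoot.powerBasis' hmonX
  haveI fintR : Fintype R := Fintype.ofEquiv _ pbR.basis.equivFun.toEquiv.symm
  have hdimR : pbR.dim = e := by
    show ((X : Polynomial F) ^ e).natDegree = e
    simp
  have hcardR : Fintype.card R = q ^ e := by
    rw [Module.card_fintype pbR.basis, hcardF, Fintype.card_fin, hdimR]
  let pbS := AdjoinRoot.powerBasis' hmonic
  haveI fintS : Fintype S := Fintype.ofEquiv _ pbS.basis.equivFun.toEquiv.symm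
  have hdimS : pbS.dim = m := hdeg
  have hcardS : Fintype.card S = q ^ (e * m) := by
    rw [Module.card_fintype pbS.basis, hcardR, Fintype.card_fin, hdimS, ← pow_mul]
  let pbK := AdjoinRoot.powerBasis' hgmonic
  haveI fintK : Fintype K := Fintype.ofEquiv _ pbK.basis.equivFun.toEquiv.symm
  have hdimK : pbK.dim = m := hgdeg
  have hcardK : Fintype.card K = q ^ m := by
    rw [Module.card_fintype pbK.basis, hcardF, Fintype.card_fin, hdimK]
  let pbT := AdjoinRoot.powerBasis' hmonXm
  haveI fintT : Fintype (AdjoinRoot ((X : Polynomial Fm) ^ e)) :=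
    Fintype.ofEquiv _ pbT.basis.equivFun.toEquiv.symm
  have hdimT : pbT.dim = e := by
    show ((X : Polynomial Fm) ^ e).natDegree = e
    simp
  have hcardT : Fintype.card (AdjoinRoot ((X : Polynomial Fm) ^ e)) = q ^ (m * e) := by
    rw [Module.card_fintype pbT.basis, hcardFm, Fintype.card_fin, hdimT, ← pow_mul]
  haveI : Nontrivial S := by
    apply Fintype.one_lt_card_iff_nontrivial.mp
    rw [hcardS]
    exact Nat.one_lt_pow (Nat.mul_ne_zero (by omega) (by omega)) hq2
  -- characteristic
  haveI hcharF : CharP F p := by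
    obtain ⟨n, hpn, hcardn⟩ := FiniteField.card F (ringChar F)
    have hrc : ringChar F = p := by
      have hdvd : p ∣ (ringChar F) ^ (n : ℕ) := by
        rw [← hcardn, hcardF, hqpk]
        exact dvd_pow_self p (by omega)
      exact ((Nat.prime_dvd_prime_iff_eq hp hpn).mp (hp.dvd_of_dvd_pow hdvd)).symm
    rw [← hrc]
    exact ringChar.charP F
  set ρ : F →+* S := (AdjoinRoot.of f).comp (algebraMap F R) with hρdef
  have hρinj : Function.Injective ρ := ρ.injective
  haveI hcharS : CharP S p := charP_of_injective_ringHom hρinj p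
  -- key elements
  set xb : S := AdjoinRoot.root f with hxbdef
  set v : S := AdjoinRoot.of f u' with hvdef
  have hu'e : u' ^ e = 0 := by
    have h0 := AdjoinRoot.mk_self (f := (X : Polynomial F) ^ e)
    rwa [map_pow, AdjoinRoot.mk_X] at h0
  have hve : v ^ e = 0 := by rw [hvdef, ← map_pow, hu'e, map_zero]
  have hπa' : ∀ a : F, π (AdjoinRoot.of ((X : Polynomial F) ^ e) a) = a := by
    intro a
    rw [← AdjoinRoot.algebraMap_eq]
    exact hπa a
  -- Lemma A: structure of elements of R
  have hA : ∀ r : R, ∃ t : R, r = AdjoinRoot.of ((X : Polynomial F) ^ e) (π r) + u' * t := by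
    intro r
    obtain ⟨P, rfl⟩ := AdjoinRoot.mk_surjective r
    have h1 : (AdjoinRoot.mk ((X : Polynomial F) ^ e)) P
        = AdjoinRoot.of ((X : Polynomial F) ^ e) (P.coeff 0)
          + u' * AdjoinRoot.mk ((X : Polynomial F) ^ e) P.divX := by
      conv_lhs => rw [← P.X_mul_divX_add]
      rw [map_add, map_mul, AdjoinRoot.mk_X]
      rw [add_comm]
      rfl
    have h2 : π ((AdjoinRoot.mk ((X : Polynomial F) ^ e)) P) = P.coeff 0 := by
      rw [h1, map_add, map_mul, hπ0, zero_mul, add_zero, hπa']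
    exact ⟨AdjoinRoot.mk ((X : Polynomial F) ^ e) P.divX, by rw [h2]; exact h1⟩
  -- the ideal I = (v) and the quotient map Q
  set I : Ideal S := Ideal.span {v} with hIdef
  set Q : S →+* S ⧸ I := Ideal.Quotient.mk I with hQdef
  have hQv : Q v = 0 := Ideal.Quotient.eq_zero_iff_mem.mpr (Ideal.mem_span_singleton_self v)
  have hker : Q.comp (AdjoinRoot.of f) = (Q.comp ρ).comp π := by
    apply RingHom.ext
    intro r
    obtain ⟨t, ht⟩ := hA r
    have h3 : AdjoinRoot.of f r = ρ (π r) + v * AdjoinRoot.of f t := by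
      conv_lhs => rw [ht]
      rw [map_add, map_mul]
      rfl
    show Q (AdjoinRoot.of f r) = Q (ρ (π r))
    rw [h3, map_add, map_mul, hQv, zero_mul, add_zero]
  -- g evaluated at xb lies in I
  have keyQ : Q (g.eval₂ ρ xb) = 0 := by
    rw [hom_eval₂, hgdef, eval₂_map, ← hker, ← hom_eval₂, AdjoinRoot.eval₂_root, map_zero]
  have hgx : g.eval₂ ρ xb ∈ I := Ideal.Quotient.eq_zero_iff_mem.mp keyQ
  -- divisibility g ∣ X^(q^m) - X over F
  have hrootK : (AdjoinRoot.root g) ^ (q ^ m) = AdjoinRoot.root g := by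
    rw [← hcardK]
    exact FiniteField.pow_card _
  have hgne : g ≠ 0 := hirr.ne_zero
  have hminp : minpoly F (AdjoinRoot.root g) = g := by
    rw [AdjoinRoot.minpoly_root hgne, hgmonic.leadingCoeff, inv_one, map_one, mul_one]
  have hdvd : g ∣ (X ^ (q ^ m) - X : Polynomial F) := by
    rw [← hminp]
    apply minpoly.dvd
    rw [map_sub, map_pow, aeval_X, hrootK, sub_self]
  obtain ⟨gw, hgw⟩ := hdvd
  have hsep : ((X : Polynomial F) ^ (q ^ m) - X).Separable := by
    apply galois_poly_separable p (q ^ m)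
    rw [hqpk, ← pow_mul]
    exact dvd_pow_self p (by positivity)
  rw [hgw] at hsep
  have hcop : IsCoprime g gw := hsep.isCoprime
  have hc : q ^ m = p ^ (k * m) := by rw [hqpk, ← pow_mul]
  -- Frobenius evaluation
  have hfrob : ∀ s : S, ((X : Polynomial F) ^ (q ^ m) - X).eval₂ ρ s = s ^ (q ^ m) - s := by
    intro s
    rw [eval₂_sub, eval₂_X_pow, eval₂_X]
  set nn : S := xb ^ (q ^ m) - xb with hnndef
  have hnmem : nn ∈ I := by
    have h4 : nn = g.eval₂ ρ xb * gw.eval₂ ρ xb := by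
      rw [← eval₂_mul, ← hgw, hfrob]
    rw [h4]
    exact Ideal.mul_mem_right _ _ hgx
  -- Teichmüller iteration
  have hiter : ∀ j : ℕ, xb ^ ((q ^ m) ^ (j + 1)) = xb ^ ((q ^ m) ^ j) + nn ^ ((q ^ m) ^ j) := by
    intro j
    induction j with
    | zero => simp [hnndef]
    | succ j ih =>
      rw [pow_succ (q ^ m) (j + 1), pow_mul xb ((q ^ m) ^ (j + 1)) (q ^ m), ih, hc,
        add_pow_char_pow _ _ p (k * m), ← hc]
      rw [← pow_mul xb ((q ^ m) ^ j) (q ^ m), ← pow_mul nn ((q ^ m) ^ j) (q ^ m),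
        ← pow_succ (q ^ m) j, ih]
  have hmem_iter : ∀ j : ℕ, xb ^ ((q ^ m) ^ j) - xb ∈ I := by
    intro j
    induction j with
    | zero => simp
    | succ j ih =>
      rw [hiter j]
      have h5 : nn ^ ((q ^ m) ^ j) ∈ I := by
        obtain ⟨d, hd⟩ : ∃ d, (q ^ m) ^ j = d + 1 :=
          ⟨(q ^ m) ^ j - 1, by
            have : 0 < (q ^ m) ^ j := pow_pos (by omega) j
            omega⟩
        rw [hd, pow_succ]
        exact Ideal.mul_mem_left _ _ hnmem
      have h6 := I.add_mem ih h5
      have h7 : xb ^ ((q ^ m) ^ j) + nn ^ ((q ^ m) ^ j) - xb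
          = (xb ^ ((q ^ m) ^ j) - xb) + nn ^ ((q ^ m) ^ j) := by ring
      rw [h7]
      exact h6
  set a : S := xb ^ ((q ^ m) ^ e) with hadef
  have hle : e ≤ (q ^ m) ^ e :=
    le_of_lt (lt_of_lt_of_le (by exact Nat.lt_two_pow_self) (Nat.pow_le_pow_left hqm2 e))
  have hac : a ^ (q ^ m) = a := by
    have h1 : a ^ (q ^ m) = a + nn ^ ((q ^ m) ^ e) := by
      rw [hadef, ← pow_mul xb ((q ^ m) ^ e) (q ^ m), ← pow_succ (q ^ m) e]
      exact hiter e
    have h2 : nn ^ ((q ^ m) ^ e) = 0 := by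
      obtain ⟨t, ht⟩ := Ideal.mem_span_singleton.mp hnmem
      obtain ⟨d, hd⟩ : ∃ d, (q ^ m) ^ e = e + d := ⟨(q ^ m) ^ e - e, by omega⟩
      rw [ht, mul_pow, hd, pow_add, hve, zero_mul, zero_mul]
    rw [h1, h2, add_zero]
  have haxb : a - xb ∈ I := hmem_iter e
  -- g(a) = 0
  have hga_mem : g.eval₂ ρ a ∈ I := by
    have hQa : Q a = Q xb := Ideal.Quotient.eq.mpr haxb
    apply Ideal.Quotient.eq_zero_iff_mem.mp
    show Q (g.eval₂ ρ a) = 0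
    rw [hom_eval₂, hQa, ← hom_eval₂]
    exact keyQ
  have hga0 : g.eval₂ ρ a = 0 := by
    obtain ⟨t₁, ht₁⟩ := Ideal.mem_span_singleton.mp hga_mem
    have hnil : IsNilpotent (g.eval₂ ρ a) := ⟨e, by rw [ht₁, mul_pow, hve, zero_mul]⟩
    have hzero : g.eval₂ ρ a * gw.eval₂ ρ a = 0 := by
      rw [← eval₂_mul, ← hgw, hfrob, hac, sub_self]
    obtain ⟨rr, ss, hrs⟩ := hcop
    have h1 : rr.eval₂ ρ a * g.eval₂ ρ a + ss.eval₂ ρ a * gw.eval₂ ρ a = 1 := by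
      rw [← eval₂_mul, ← eval₂_mul, ← eval₂_add, hrs, eval₂_one]
    have h2 : g.eval₂ ρ a * (1 - rr.eval₂ ρ a * g.eval₂ ρ a) = 0 := by
      have h8 : g.eval₂ ρ a * (1 - rr.eval₂ ρ a * g.eval₂ ρ a)
          = ss.eval₂ ρ a * (g.eval₂ ρ a * gw.eval₂ ρ a)
            - (rr.eval₂ ρ a * g.eval₂ ρ a + ss.eval₂ ρ a * gw.eval₂ ρ a - 1) * g.eval₂ ρ a := by
        ring
      rw [h8, hzero, h1]
      ring
    have hu : IsUnit (1 - rr.eval₂ ρ a * g.eval₂ ρ a) :=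
      IsNilpotent.isUnit_one_sub ((Commute.all _ _).isNilpotent_mul_left hnil)
    exact (hu.mul_left_eq_zero).mp h2
  -- the maps
  set ι : K →+* S := AdjoinRoot.lift ρ a hga0 with hιdef
  set em' : Fm ≃+* K := FiniteField.ringEquivOfCardEq (by rw [hcardFm, hcardK]) with hemdef
  set φ : Fm →+* S := ι.comp em'.toRingHom with hφdef
  have hψ0 : ((X : Polynomial Fm) ^ e).eval₂ φ v = 0 := by rw [eval₂_X_pow, hve]
  set ψ : AdjoinRoot ((X : Polynomial Fm) ^ e) →+* S := AdjoinRoot.lift φ v hψ0 with hψdef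
  -- surjectivity of ψ
  have hvB : v ∈ ψ.range := ⟨AdjoinRoot.root _, AdjoinRoot.lift_root hψ0⟩
  have haB : a ∈ ψ.range := by
    refine ⟨AdjoinRoot.mk _ (C (em'.symm (AdjoinRoot.root g))), ?_⟩
    rw [hψdef, AdjoinRoot.lift_mk, eval₂_C]
    show ι (em' (em'.symm (AdjoinRoot.root g))) = a
    rw [RingEquiv.apply_symm_apply]
    exact AdjoinRoot.lift_root hga0
  have hρB : ∀ cF : F, ρ cF ∈ ψ.range := by
    intro cF
    refine ⟨AdjoinRoot.mk _ (C (em'.symm (AdjoinRoot.of g cF))), ?_⟩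
    rw [hψdef, AdjoinRoot.lift_mk, eval₂_C]
    show ι (em' (em'.symm (AdjoinRoot.of g cF))) = ρ cF
    rw [RingEquiv.apply_symm_apply]
    show AdjoinRoot.lift ρ a hga0 (AdjoinRoot.mk g (C cF)) = ρ cF
    rw [AdjoinRoot.lift_mk, eval₂_C]
  have hstar : ∀ s : S, ∃ b ∈ ψ.range, ∃ t : S, s = b + v * t := by
    intro s
    have hs : s ∈ Algebra.adjoin R ({AdjoinRoot.root f} : Set S) := by
      rw [AdjoinRoot.adjoinRoot_eq_top]
      trivial
    refine Algebra.adjoin_induction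
      (p := fun x _ => ∃ b ∈ ψ.range, ∃ t : S, x = b + v * t) ?_ ?_ ?_ ?_ hs
    · rintro x hx
      rw [Set.mem_singleton_iff] at hx
      subst hx
      obtain ⟨t', ht'⟩ := Ideal.mem_span_singleton.mp haxb
      exact ⟨a, haB, -t', by rw [mul_neg, ← ht']; ring⟩
    · intro r
      obtain ⟨t, ht⟩ := hA r
      refine ⟨ρ (π r), hρB _, AdjoinRoot.of f t, ?_⟩
      rw [AdjoinRoot.algebraMap_eq]
      conv_lhs => rw [ht]
      rw [map_add, map_mul]
      rfl
    · rintro x y hx hy ⟨b, hb, t, rfl⟩ ⟨b', hb', t', rfl⟩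
      exact ⟨b + b', add_mem hb hb', t + t', by ring⟩
    · rintro x y hx hy ⟨b, hb, t, rfl⟩ ⟨b', hb', t', rfl⟩
      exact ⟨b * b', mul_mem hb hb', t * b' + b * t' + v * (t * t'), by ring⟩
  have hkey : ∀ j : ℕ, ∀ s : S, ∃ b ∈ ψ.range, ∃ t : S, s = b + v ^ j * t := by
    intro j
    induction j with
    | zero => intro s; exact ⟨0, zero_mem _, s, by simp⟩
    | succ j ih =>
      intro s
      obtain ⟨b, hb, t, rfl⟩ := ih s
      obtain ⟨b', hb', t', rfl⟩ := hstar t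
      exact ⟨b + v ^ j * b', add_mem hb (mul_mem (pow_mem hvB j) hb'), t', by ring⟩
  have hsurj : Function.Surjective ψ := by
    intro s
    obtain ⟨b, hb, t, hbt⟩ := hkey e s
    rw [hve, zero_mul, add_zero] at hbt
    obtain ⟨y, hy⟩ := RingHom.mem_range.mp hb
    exact ⟨y, by rw [hy, ← hbt]⟩
  -- conclusion
  have hbij : Function.Bijective ψ := by
    rw [Fintype.bijective_iff_surjective_and_card]
    refine ⟨hsurj, ?_⟩
    rw [hcardT, hcardS, mul_comm]
  exact ⟨(RingEquiv.ofBijective ψ hbij).symm⟩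
end

section
/- If C is a Hermitian self-dual linear code of length n over R = F_q[u]/(u^3) (q a square), then Tor_1(C) is a Hermitian self-dual linear code of length n over F_q. -/
open Polynomial

/-- `R = F_q[u]/(u^3)`. -/
abbrev R3 (F : Type*) [Field F] : Type _ := AdjoinRoot ((X : Polynomial F) ^ 3)

/-- Hermitian dual (as a set) of a linear code over `R = F_q[u]/(u^3)`, with respect to
`⟨u,v⟩_H = Σ u_i bar(v_i)`. -/
def HdualR {F : Type*} [Field F] {n : ℕ} (bar : R3 F →+* R3 F)
    (C : Submodule (R3 F) (Fin n → R3 F)) : Set (Fin n → R3 F) :=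
  { v | ∀ c ∈ C, ∑ i, c i * bar (v i) = 0 }

/-- Hermitian dual (as a set) of a code `D ⊆ F_q^n` with `⟨x,y⟩_H = Σ x_i y_i^r`,
`r = √q`. -/
def HdualF {F : Type*} [Field F] (r : ℕ) {n : ℕ} (D : Set (Fin n → F)) :
    Set (Fin n → F) :=
  { y | ∀ x ∈ D, ∑ i, x i * y i ^ r = 0 }

noncomputable def rbasis (F : Type*) [Field F] : Module.Basis (Fin 3) F (R3 F) :=
  (AdjoinRoot.powerBasis' (monic_X_pow 3 (R := F))).basis.reindex
    (finCongr (natDegree_X_pow 3))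

lemma rbasis_apply (F : Type*) [Field F] (i : Fin 3) :
    rbasis F i = (AdjoinRoot.root ((X : Polynomial F) ^ 3)) ^ (i : ℕ) := by
  rw [rbasis, Module.Basis.reindex_apply, PowerBasis.basis_eq_pow]
  simp
  rfl

lemma ru3 (F : Type*) [Field F] :
    (AdjoinRoot.root ((X : Polynomial F) ^ 3)) ^ 3 = 0 := by
  rw [← AdjoinRoot.mk_X, ← map_pow, AdjoinRoot.mk_self]

lemma decomp (F : Type*) [Field F] (x : R3 F) :
    x = algebraMap F (R3 F) ((rbasis F).repr x 0)
      + (AdjoinRoot.root ((X : Polynomial F) ^ 3)) * algebraMap F (R3 F) ((rbasis F).repr x 1)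
      + (AdjoinRoot.root ((X : Polynomial F) ^ 3)) ^ 2
          * algebraMap F (R3 F) ((rbasis F).repr x 2) := by
  have h := Module.Basis.sum_repr (rbasis F) x
  rw [Fin.sum_univ_three] at h
  simp only [rbasis_apply, Algebra.smul_def, Fin.val_zero, Fin.val_one, Fin.val_two,
    pow_zero, pow_one, mul_one] at h
  conv_lhs => rw [← h]
  ring

lemma rinj (F : Type*) [Field F] (a : F)
    (h : (AdjoinRoot.root ((X : Polynomial F) ^ 3)) ^ 2 * algebraMap F (R3 F) a = 0) :
    a = 0 := by
  have h2 : a • rbasis F 2 = 0 := by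
    rw [rbasis_apply, (show ((2 : Fin 3) : ℕ) = 2 from rfl), Algebra.smul_def]
    rw [← h]; ring
  have := congrArg (fun t => (rbasis F).repr t 2) h2
  simpa using this


set_option maxHeartbeats 1000000 in
/-- If `C` is a Hermitian self-dual linear code of length `n` over
`R = F_q[u]/(u^3)` (`q = r^2` a square), then `Tor_1(C)` is a Hermitian self-dual code
of length `n` over `F_q`. -/
theorem stmt_4 (p j r n : ℕ) (hp : p.Prime) (hj : 1 ≤ j) (hr : r = p ^ j)
    (F : Type*) [Field F] [Fintype F] (hcard : Fintype.card F = r ^ 2)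
    (bar : R3 F →+* R3 F)
    (hbar1 : ∀ a : F, bar (algebraMap F (R3 F) a) = algebraMap F (R3 F) (a ^ r))
    (hbar2 : bar (AdjoinRoot.root ((X : Polynomial F) ^ 3)) =
      AdjoinRoot.root ((X : Polynomial F) ^ 3))
    (π : R3 F →+* F)
    (hπ0 : π (AdjoinRoot.root ((X : Polynomial F) ^ 3)) = 0)
    (hπa : ∀ a : F, π (algebraMap F (R3 F) a) = a)
    (C : Submodule (R3 F) (Fin n → R3 F))
    (hC : (C : Set (Fin n → R3 F)) = HdualR bar C)
    (T1 : Set (Fin n → F))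
    (hT1 : T1 = { w | ∃ v : Fin n → R3 F,
      (AdjoinRoot.root ((X : Polynomial F) ^ 3)) • v ∈ C ∧ w = fun i => π (v i) }) :
    T1 = HdualF r T1 := by
  set u : R3 F := AdjoinRoot.root ((X : Polynomial F) ^ 3) with hu
  set alg : F →+* R3 F := algebraMap F (R3 F) with halg
  have hu3 : u ^ 3 = 0 := ru3 F
  have hpi : ∀ x : R3 F, π x = (rbasis F).repr x 0 := by
    intro x
    conv_lhs => rw [decomp F x]
    rw [← hu, ← halg]
    simp only [map_add, map_mul, map_pow, hπ0, hπa]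
    ring
  have hpow : ∀ t : F, (t ^ r) ^ r = t := by
    intro t
    rw [← pow_mul, ← sq, ← hcard, FiniteField.pow_card]
  have hbarx : ∀ x : R3 F, bar x = alg ((rbasis F).repr x 0 ^ r)
      + u * alg ((rbasis F).repr x 1 ^ r) + u ^ 2 * alg ((rbasis F).repr x 2 ^ r) := by
    intro x
    conv_lhs => rw [decomp F x]
    rw [← hu, ← halg]
    rw [map_add, map_add, map_mul, map_mul, map_pow, hbar2, hbar1, hbar1, hbar1]
  have hpibar : ∀ x : R3 F, π (bar x) = (π x) ^ r := by
    intro x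
    rw [hbarx x, hpi x]
    simp only [map_add, map_mul, map_pow, hπ0, hπa]
    ring
  have hmemT1 : ∀ c : Fin n → R3 F, c ∈ C → (fun i => π (c i)) ∈ T1 := by
    intro c hc
    rw [hT1]
    exact ⟨c, C.smul_mem u hc, rfl⟩
  apply Set.Subset.antisymm
  · -- T1 ⊆ HdualF r T1
    intro w hw
    rw [hT1] at hw
    obtain ⟨v, hv, rfl⟩ := hw
    intro x hx
    rw [hT1] at hx
    obtain ⟨c, hc, rfl⟩ := hx
    have hdv : ∀ c' ∈ C, ∑ i, c' i * bar ((u • v) i) = 0 := by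
      have h0 : u • v ∈ (C : Set (Fin n → R3 F)) := hv
      rw [hC] at h0
      exact h0
    set S : R3 F := ∑ i, c i * bar (v i) with hSdef
    have hS : u ^ 2 * S = 0 := by
      have h1 := hdv (u • c) hc
      rw [← h1, hSdef, Finset.mul_sum]
      refine Finset.sum_congr rfl fun i _ => ?_
      have e1 : (u • c) i = u * c i := rfl
      have e2 : (u • v) i = u * v i := rfl
      rw [e1, e2, map_mul, hbar2]
      ring
    have hS0 : (rbasis F).repr S 0 = 0 := by
      apply rinj F
      rw [← hu, ← halg]
      have h2 : u ^ 2 * alg ((rbasis F).repr S 0) = u ^ 2 * S := by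
        conv_rhs => rw [decomp F S]
        rw [← hu, ← halg]
        linear_combination (-(alg ((rbasis F).repr S 1)) - u * alg ((rbasis F).repr S 2)) * hu3
      rw [h2, hS]
    show ∑ i, π (c i) * π (v i) ^ r = 0
    calc ∑ i, π (c i) * π (v i) ^ r
        = ∑ i, π (c i * bar (v i)) := by
          refine Finset.sum_congr rfl fun i _ => ?_
          rw [map_mul, hpibar]
      _ = π S := by rw [hSdef, map_sum]
      _ = 0 := by rw [hpi S, hS0]
  · -- HdualF r T1 ⊆ T1
    intro y hy
    have hy' : ∀ x ∈ T1, ∑ i, x i * y i ^ r = 0 := hy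
    set CF : Submodule F (Fin n → R3 F) := Submodule.restrictScalars F C with hCF
    have hsmul : ∀ (a : F) (x : R3 F), a • x = alg a * x := fun a x => Algebra.smul_def a x
    set L : (Fin n → R3 F) →ₗ[F] (Fin n → F) :=
      { toFun := fun v i => π (v i)
        map_add' := by intro v₁ v₂; funext i; simp
        map_smul' := by
          intro a v; funext i
          show π ((a • v) i) = a * π (v i)
          have e1 : (a • v) i = a • v i := rfl
          rw [e1, hsmul, map_mul, hπa] } with hL
    set Hl : (Fin n → R3 F) →ₗ[F] F :=
      { toFun := fun c => ∑ i, (rbasis F).repr (c i) 1 * y i ^ r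
        map_add' := by
          intro c₁ c₂
          show ∑ i, (rbasis F).repr ((c₁ + c₂) i) 1 * y i ^ r
            = (∑ i, (rbasis F).repr (c₁ i) 1 * y i ^ r)
              + ∑ i, (rbasis F).repr (c₂ i) 1 * y i ^ r
          rw [← Finset.sum_add_distrib]
          refine Finset.sum_congr rfl fun i _ => ?_
          have e1 : (c₁ + c₂) i = c₁ i + c₂ i := rfl
          rw [e1, map_add, Finsupp.add_apply, add_mul]
        map_smul' := by
          intro a c
          show ∑ i, (rbasis F).repr ((a • c) i) 1 * y i ^ r
            = a • ∑ i, (rbasis F).repr (c i) 1 * y i ^ r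
          rw [smul_eq_mul, Finset.mul_sum]
          refine Finset.sum_congr rfl fun i _ => ?_
          have e1 : (a • c) i = a • c i := rfl
          rw [e1, map_smul, Finsupp.smul_apply, smul_eq_mul, mul_assoc] } with hHl
    set L' : CF →ₗ[F] (Fin n → F) := L.comp CF.subtype with hL'
    set H : CF →ₗ[F] F := Hl.comp CF.subtype with hH
    have hker : LinearMap.ker L' ≤ LinearMap.ker H := by
      rintro ⟨c, hc⟩ hk
      rw [LinearMap.mem_ker] at hk ⊢
      have hk' : ∀ i, π (c i) = 0 := fun i => congrFun hk i
      have hmem : (fun i => (rbasis F).repr (c i) 1) ∈ T1 := by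
        rw [hT1]
        refine ⟨fun i => alg ((rbasis F).repr (c i) 1) + u * alg ((rbasis F).repr (c i) 2),
          ?_, ?_⟩
        · have h3 : (u • fun i => alg ((rbasis F).repr (c i) 1)
              + u * alg ((rbasis F).repr (c i) 2)) = c := by
            funext i
            show u * (alg ((rbasis F).repr (c i) 1) + u * alg ((rbasis F).repr (c i) 2)) = c i
            conv_rhs => rw [decomp F (c i)]
            rw [← hu, ← halg, ← hpi (c i), hk' i]
            rw [map_zero]
            ring
          rw [h3]
          exact hc
        · funext i
          show (rbasis F).repr (c i) 1
            = π (alg ((rbasis F).repr (c i) 1) + u * alg ((rbasis F).repr (c i) 2))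
          rw [map_add, map_mul, hπ0, hπa]
          ring
      have h4 := hy' _ hmem
      exact h4
    set e := LinearMap.quotKerEquivRange L' with he
    set f : LinearMap.range L' →ₗ[F] F :=
      ((LinearMap.ker L').liftQ H hker).comp (e.symm : LinearMap.range L' →ₗ[F] _) with hf
    obtain ⟨g, hg⟩ := LinearMap.exists_extend f
    have hgL : ∀ c : Fin n → R3 F, c ∈ C → g (fun i => π (c i)) = Hl c := by
      intro c hc
      have hcf : c ∈ CF := hc
      have hm : L' ⟨c, hcf⟩ ∈ LinearMap.range L' := LinearMap.mem_range_self _ _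
      have h1 : (fun i => π (c i)) = (LinearMap.range L').subtype ⟨L' ⟨c, hcf⟩, hm⟩ := rfl
      rw [h1, ← LinearMap.comp_apply, hg, hf]
      have h2 : e.symm ⟨L' ⟨c, hcf⟩, hm⟩ = Submodule.Quotient.mk ⟨c, hcf⟩ := by
        rw [LinearEquiv.symm_apply_eq, he]
        exact Subtype.ext (L'.quotKerEquivRange_apply_mk ⟨c, hcf⟩).symm
      rw [LinearMap.comp_apply]
      show ((LinearMap.ker L').liftQ H hker) (e.symm ⟨L' ⟨c, hcf⟩, hm⟩) = Hl c
      rw [h2, Submodule.liftQ_apply]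
      rfl
    have hgsum : ∀ x : Fin n → F, g x = ∑ i, x i * g (Pi.single i 1) := by
      intro x
      have hx : x = ∑ i, x i • Pi.single (M := fun _ : Fin n => F) i 1 := by
        funext k
        rw [Finset.sum_apply]
        simp [Pi.single_apply, eq_comm]
      conv_lhs => rw [hx]
      rw [map_sum]
      refine Finset.sum_congr rfl fun i _ => ?_
      rw [map_smul, smul_eq_mul]
    set z : Fin n → F := fun i => (-(g (Pi.single i 1))) ^ r with hz
    have hzr : ∀ i, z i ^ r = -(g (Pi.single i 1)) := fun i => hpow _
    set v : Fin n → R3 F := fun i => alg (y i) + u * alg (z i) with hv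
    have hvC : u • v ∈ C := by
      have hse : u • v ∈ (C : Set (Fin n → R3 F)) := by
        rw [hC]
        intro c hc
        have key : ∀ i, c i * bar ((u • v) i)
            = u * alg (π (c i) * y i ^ r)
              + u ^ 2 * alg (π (c i) * z i ^ r + (rbasis F).repr (c i) 1 * y i ^ r) := by
          intro i
          have hbv : bar ((u • v) i) = u * (alg (y i ^ r) + u * alg (z i ^ r)) := by
            have e1 : (u • v) i = u * (alg (y i) + u * alg (z i)) := rfl
            rw [e1, map_mul, map_add, map_mul, hbar2, hbar1, hbar1]
          rw [hbv, hpi (c i)]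
          conv_lhs => rw [decomp F (c i)]
          rw [← hu, ← halg]
          simp only [map_add, map_mul]
          linear_combination (alg ((rbasis F).repr (c i) 1) * alg (z i ^ r)
            + alg ((rbasis F).repr (c i) 2) * alg (y i ^ r)
            + u * (alg ((rbasis F).repr (c i) 2) * alg (z i ^ r))) * hu3
        calc ∑ i, c i * bar ((u • v) i)
            = ∑ i, (u * alg (π (c i) * y i ^ r)
              + u ^ 2 * alg (π (c i) * z i ^ r + (rbasis F).repr (c i) 1 * y i ^ r)) :=
              Finset.sum_congr rfl fun i _ => key i
          _ = u * alg (∑ i, π (c i) * y i ^ r)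
              + u ^ 2 * alg (∑ i, (π (c i) * z i ^ r + (rbasis F).repr (c i) 1 * y i ^ r)) := by
              rw [Finset.sum_add_distrib, map_sum, map_sum, Finset.mul_sum, Finset.mul_sum]
          _ = 0 := by
              have h1 : ∑ i, π (c i) * y i ^ r = 0 := hy' _ (hmemT1 c hc)
              have h2 : ∑ i, (π (c i) * z i ^ r + (rbasis F).repr (c i) 1 * y i ^ r) = 0 := by
                rw [Finset.sum_add_distrib]
                have h3 : ∑ i, π (c i) * z i ^ r = -(Hl c) := by
                  calc ∑ i, π (c i) * z i ^ r
                      = ∑ i, π (c i) * (-(g (Pi.single i 1))) := by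
                        refine Finset.sum_congr rfl fun i _ => ?_
                        rw [hzr i]
                    _ = -(∑ i, π (c i) * g (Pi.single i 1)) := by
                        rw [← Finset.sum_neg_distrib]
                        exact Finset.sum_congr rfl fun i _ => by ring
                    _ = -(g (fun i => π (c i))) := by rw [← hgsum]
                    _ = -(Hl c) := by rw [hgL c hc]
                rw [h3]
                show -(Hl c) + ∑ i, (rbasis F).repr (c i) 1 * y i ^ r = 0
                have h5 : Hl c = ∑ i, (rbasis F).repr (c i) 1 * y i ^ r := rfl
                rw [h5]
                ring
              rw [h1, h2, map_zero]; ring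
      exact hse
    rw [hT1]
    refine ⟨v, hvC, ?_⟩
    funext i
    show y i = π (alg (y i) + u * alg (z i))
    rw [map_add, map_mul, hπ0, hπa]
    ring
end

section
/- If C is a Hermitian self-dual linear code of length n over R = F_q[u]/(u^3) (q a square), then Tor_2(C) equals the Hermitian dual of the residue code Res(C) = Tor_0(C) in F_q^n. -/
open Polynomial

section Aux

variable {F : Type*} [Field F]

/-- `u^3 = 0` in `R3 F`. -/
lemma aux_root_cube : (AdjoinRoot.root ((X : Polynomial F) ^ 3)) ^ 3 = 0 := by
  have := AdjoinRoot.eval₂_root ((X : Polynomial F) ^ 3)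
  simpa using this

lemma aux_pi_mk (π : R3 F →+* F)
    (hπ0 : π (AdjoinRoot.root ((X : Polynomial F) ^ 3)) = 0)
    (hπa : ∀ a : F, π (algebraMap F (R3 F) a) = a) (g : Polynomial F) :
    π (AdjoinRoot.mk ((X : Polynomial F) ^ 3) g) = g.coeff 0 := by
  have hof : AdjoinRoot.of ((X : Polynomial F) ^ 3) = algebraMap F (R3 F) :=
    (AdjoinRoot.algebraMap_eq _).symm
  have h : π.comp (AdjoinRoot.mk ((X : Polynomial F) ^ 3)) = Polynomial.constantCoeff := by
    apply Polynomial.ringHom_ext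
    · intro a
      show π (AdjoinRoot.mk _ (Polynomial.C a)) = (Polynomial.C a).coeff 0
      rw [AdjoinRoot.mk_C, hof, hπa, Polynomial.coeff_C_zero]
    · show π (AdjoinRoot.mk _ X) = (X : Polynomial F).coeff 0
      rw [AdjoinRoot.mk_X, hπ0, Polynomial.coeff_X_zero]
  exact RingHom.congr_fun h g

/-- Every element of `R3 F` decomposes as `algebraMap (π s) + u * t`. -/
lemma aux_decomp (π : R3 F →+* F)
    (hπ0 : π (AdjoinRoot.root ((X : Polynomial F) ^ 3)) = 0)
    (hπa : ∀ a : F, π (algebraMap F (R3 F) a) = a) (s : R3 F) :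
    ∃ t : R3 F, s = algebraMap F (R3 F) (π s) +
      AdjoinRoot.root ((X : Polynomial F) ^ 3) * t := by
  obtain ⟨g, rfl⟩ := AdjoinRoot.mk_surjective s
  refine ⟨AdjoinRoot.mk _ g.divX, ?_⟩
  rw [aux_pi_mk π hπ0 hπa]
  have := congrArg (AdjoinRoot.mk ((X : Polynomial F) ^ 3)) (Polynomial.X_mul_divX_add g)
  rw [map_add, map_mul, AdjoinRoot.mk_X, AdjoinRoot.mk_C] at this
  rw [← this, AdjoinRoot.algebraMap_eq]
  ring

lemma aux_usq_algebraMap (a : F)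
    (h : (AdjoinRoot.root ((X : Polynomial F) ^ 3)) ^ 2 * algebraMap F (R3 F) a = 0) :
    a = 0 := by
  by_contra ha
  have h2 : (AdjoinRoot.mk ((X : Polynomial F) ^ 3)) (X ^ 2 * C a) = 0 := by
    rw [map_mul, map_pow, AdjoinRoot.mk_X, AdjoinRoot.mk_C]
    exact h
  rw [AdjoinRoot.mk_eq_zero] at h2
  have hne : (X : Polynomial F) ^ 2 * C a ≠ 0 := by
    apply mul_ne_zero
    · exact pow_ne_zero _ Polynomial.X_ne_zero
    · exact fun hc => ha (by simpa using congrArg (fun p => Polynomial.coeff p 0) hc)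
  have hdeg : ((X : Polynomial F) ^ 2 * Polynomial.C a).natDegree = 2 := by
    rw [mul_comm, Polynomial.natDegree_C_mul ha, Polynomial.natDegree_X_pow]
  have h3 := Polynomial.natDegree_le_of_dvd h2 hne
  rw [hdeg, Polynomial.natDegree_pow, Polynomial.natDegree_X] at h3
  omega

/-- Key: `u^2 * s = 0 ↔ π s = 0`. -/
lemma aux_key (π : R3 F →+* F)
    (hπ0 : π (AdjoinRoot.root ((X : Polynomial F) ^ 3)) = 0)
    (hπa : ∀ a : F, π (algebraMap F (R3 F) a) = a) (s : R3 F) :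
    (AdjoinRoot.root ((X : Polynomial F) ^ 3)) ^ 2 * s = 0 ↔ π s = 0 := by
  obtain ⟨t, ht⟩ := aux_decomp π hπ0 hπa s
  set u := AdjoinRoot.root ((X : Polynomial F) ^ 3) with hu
  have hcube : u ^ 3 = 0 := aux_root_cube
  have hsimp : u ^ 2 * s = u ^ 2 * algebraMap F (R3 F) (π s) := by
    conv_lhs => rw [ht]
    rw [mul_add]
    have : u ^ 2 * (u * t) = u ^ 3 * t := by ring
    rw [this, hcube, zero_mul, add_zero]
  constructor
  · intro h
    rw [hsimp] at h
    exact aux_usq_algebraMap _ h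
  · intro h
    rw [hsimp, h, map_zero, mul_zero]

end Aux

/-- If `C` is a Hermitian self-dual linear code of length `n` over
`R = F_q[u]/(u^3)` (`q = r^2` a square), then `Tor_2(C)` equals the Hermitian dual of
the residue code `Res(C) = Tor_0(C)` in `F_q^n`. -/
theorem stmt_5 (p j r n : ℕ) (hp : p.Prime) (hj : 1 ≤ j) (hr : r = p ^ j)
    (F : Type*) [Field F] [Fintype F] (hcard : Fintype.card F = r ^ 2)
    (bar : R3 F →+* R3 F)
    (hbar1 : ∀ a : F, bar (algebraMap F (R3 F) a) = algebraMap F (R3 F) (a ^ r))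
    (hbar2 : bar (AdjoinRoot.root ((X : Polynomial F) ^ 3)) =
      AdjoinRoot.root ((X : Polynomial F) ^ 3))
    (π : R3 F →+* F)
    (hπ0 : π (AdjoinRoot.root ((X : Polynomial F) ^ 3)) = 0)
    (hπa : ∀ a : F, π (algebraMap F (R3 F) a) = a)
    (C : Submodule (R3 F) (Fin n → R3 F))
    (hC : (C : Set (Fin n → R3 F)) = HdualR bar C)
    (T0 T2 : Set (Fin n → F))
    (hT0 : T0 = { w | ∃ v : Fin n → R3 F, v ∈ C ∧ w = fun i => π (v i) })
    (hT2 : T2 = { w | ∃ v : Fin n → R3 F,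
      (AdjoinRoot.root ((X : Polynomial F) ^ 3)) ^ 2 • v ∈ C ∧ w = fun i => π (v i) }) :
    T2 = HdualF r T0 := by
  -- characteristic of F
  haveI : Fact p.Prime := ⟨hp⟩
  have hcharp : CharP F p := by
    obtain ⟨m, hq, hcd⟩ := FiniteField.card F (ringChar F)
    have hrc : ringChar F = p := by
      have hdvd : ringChar F ∣ p ^ (j * 2) := by
        have h1 : ringChar F ∣ Fintype.card F := by
          rw [hcd]; exact dvd_pow_self _ (by positivity : 0 < (m:ℕ)).ne'
        rwa [hcard, hr, ← pow_mul] at h1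
      exact (Nat.prime_dvd_prime_iff_eq hq hp).mp (hq.dvd_of_dvd_pow hdvd)
    rw [← hrc]; exact ringChar.charP F
  haveI := hcharp
  haveI : ExpChar F p := ExpChar.prime hp
  -- π ∘ bar = frobenius^j ∘ π
  have hpibar : ∀ s : R3 F, π (bar s) = (π s) ^ r := by
    have hr0 : r ≠ 0 := by rw [hr]; exact pow_ne_zero _ hp.pos.ne'
    have h : (π.comp bar).comp (AdjoinRoot.mk ((X : Polynomial F) ^ 3)) =
        ((iterateFrobenius F p j).comp π).comp (AdjoinRoot.mk ((X : Polynomial F) ^ 3)) := by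
      have hof : AdjoinRoot.of ((X : Polynomial F) ^ 3) = algebraMap F (R3 F) :=
        (AdjoinRoot.algebraMap_eq _).symm
      apply Polynomial.ringHom_ext
      · intro a
        simp only [RingHom.comp_apply, AdjoinRoot.mk_C, hof]
        rw [hbar1, hπa, hπa, iterateFrobenius_def, ← hr]
      · simp only [RingHom.comp_apply, AdjoinRoot.mk_X]
        rw [hbar2, hπ0, map_zero]
    intro s
    obtain ⟨g, rfl⟩ := AdjoinRoot.mk_surjective s
    have := RingHom.congr_fun h g
    simp only [RingHom.comp_apply] at this
    rw [this, iterateFrobenius_def, ← hr]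
  set u := AdjoinRoot.root ((X : Polynomial F) ^ 3) with hu
  have hmemC : ∀ x : Fin n → R3 F, x ∈ C ↔ x ∈ HdualR bar C := fun x => by
    rw [← hC]; rfl
  ext w
  simp only [hT2, hT0, Set.mem_setOf_eq, HdualF]
  constructor
  · rintro ⟨v, hv, rfl⟩
    rintro x ⟨c, hc, rfl⟩
    have hdual := (hmemC _).mp hv c hc
    have : ∑ i, c i * bar ((u ^ 2 • v) i) = u ^ 2 * ∑ i, c i * bar (v i) := by
      rw [Finset.mul_sum]
      apply Finset.sum_congr rfl
      intro i _
      simp only [Pi.smul_apply, smul_eq_mul, map_mul, map_pow, hbar2, ← hu]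
      ring
    rw [this] at hdual
    have hpi := (aux_key π hπ0 hπa _).mp hdual
    rw [map_sum] at hpi
    simp only [map_mul, hpibar] at hpi
    exact hpi
  · intro hw
    refine ⟨fun i => algebraMap F (R3 F) (w i), ?_, ?_⟩
    · rw [hmemC]
      intro c hc
      have hsum := hw _ ⟨c, hc, rfl⟩
      have : ∑ i, c i * bar ((u ^ 2 • fun i => algebraMap F (R3 F) (w i)) i) =
          u ^ 2 * ∑ i, c i * algebraMap F (R3 F) (w i ^ r) := by
        rw [Finset.mul_sum]
        apply Finset.sum_congr rfl
        intro i _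
        simp only [Pi.smul_apply, smul_eq_mul, map_mul, map_pow, hbar2, hbar1, ← hu]
        ring
      rw [this]
      rw [aux_key π hπ0 hπa]
      rw [map_sum]
      simp only [map_mul, hπa]
      exact hsum
    · funext i
      rw [hπa]
end

section
/- Let C_1 be a Hermitian self-dual code of length n over F_q (q a square) with generator matrix [[I_k, A_2, A_{30}, A_{40}],[0, I_l, B_3, B_{40}]] in block form with column blocks of sizes k, l, l, k. Then the matrix H = [[\bar{A_{30}}, \bar{A_{40}}],[\bar{B_3}, \bar{B_{40}}]] is invertible. -/
/-- Conjugate transpose `X^† = (bar X)^T` with `bar` the entrywise map `a ↦ a^r`. -/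
def daggerF {F : Type*} [Field F] (r : ℕ) {α β : Type*} (M : Matrix α β F) :
    Matrix β α F :=
  (M.map fun a => a ^ r).transpose

/-- Let `C_1` be a Hermitian self-dual code of length `n = 2(k+l)` over
`F_q` (`q = r^2`) with generator matrix `[[I_k, A_2, A_30, A_40],[0, I_l, B_3, B_40]]`
(column blocks of sizes `k, l, l, k`), so that the rows are pairwise Hermitian
orthogonal.  Then `H = [[bar A_30, bar A_40],[bar B_3, bar B_40]]` is invertible. -/
theorem stmt_10 (p j r k l n : ℕ) (hp : p.Prime) (hj : 1 ≤ j) (hr : r = p ^ j)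
    (hn : n = 2 * (k + l))
    (F : Type*) [Field F] [Fintype F] (hcard : Fintype.card F = r ^ 2)
    (A2 : Matrix (Fin k) (Fin l) F) (A30 : Matrix (Fin k) (Fin l) F)
    (A40 : Matrix (Fin k) (Fin k) F) (B3 : Matrix (Fin l) (Fin l) F)
    (B40 : Matrix (Fin l) (Fin k) F)
    (h1 : (1 : Matrix (Fin k) (Fin k) F) + A2 * daggerF r A2 + A30 * daggerF r A30 +
      A40 * daggerF r A40 = 0)
    (h2 : A2 + A30 * daggerF r B3 + A40 * daggerF r B40 = 0)
    (h3 : (1 : Matrix (Fin l) (Fin l) F) + B3 * daggerF r B3 + B40 * daggerF r B40 = 0) :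
    ∃ J : Matrix (Fin l ⊕ Fin k) (Fin k ⊕ Fin l) F,
      Matrix.fromBlocks (A30.map fun a => a ^ r) (A40.map fun a => a ^ r)
        (B3.map fun a => a ^ r) (B40.map fun a => a ^ r) * J = 1 ∧
      J * Matrix.fromBlocks (A30.map fun a => a ^ r) (A40.map fun a => a ^ r)
        (B3.map fun a => a ^ r) (B40.map fun a => a ^ r) = 1 := by
  classical
  -- characteristic p
  have hpF : (p : F) = 0 := by
    have hc : ((Fintype.card F : ℕ) : F) = 0 := FiniteField.cast_card_eq_zero F
    rw [hcard, hr, ← pow_mul] at hc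
    push_cast at hc
    exact pow_eq_zero_iff (by positivity) |>.mp hc
  haveI : CharP F p := (CharP.charP_iff_prime_eq_zero hp).mpr hpF
  haveI : ExpChar F p := ExpChar.prime hp
  set f : F →+* F := iterateFrobenius F p j with hf
  have hfr : ∀ a : F, f a = a ^ r := fun a => by
    rw [hf, iterateFrobenius_def, hr]
  have hff : ∀ a : F, f (f a) = a := by
    intro a
    rw [hfr, hfr, ← pow_mul, ← sq, ← hcard, FiniteField.pow_card]
  -- dagger as a ring-hom map + transpose
  have hmapf : ∀ {α β : Type} (X : Matrix α β F), (X.map fun a => a ^ r) = X.map f := by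
    intro α β X
    ext i j'
    simp [Matrix.map_apply, hfr]
  have hdag : ∀ {α β : Type} (M : Matrix α β F), daggerF r M = (M.map f).transpose := by
    intro α β M
    unfold daggerF
    rw [hmapf]
  have dag_mul : ∀ {α β γ : Type} [Fintype β] (X : Matrix α β F) (Y : Matrix β γ F),
      daggerF r (X * Y) = daggerF r Y * daggerF r X := by
    intro α β γ _ X Y
    rw [hdag, hdag, hdag, Matrix.map_mul, Matrix.transpose_mul]
  have dag_dag : ∀ {α β : Type} (X : Matrix α β F), daggerF r (daggerF r X) = X := by
    intro α β X
    rw [hdag, hdag, Matrix.transpose_map, Matrix.transpose_transpose, Matrix.map_map]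
    ext i j'
    simp [Matrix.map_apply, hff]
  have dag_add : ∀ {α β : Type} (X Y : Matrix α β F),
      daggerF r (X + Y) = daggerF r X + daggerF r Y := by
    intro α β X Y
    rw [hdag, hdag, hdag]
    ext i j'
    simp
  have dag_zero : ∀ {α β : Type}, daggerF r (0 : Matrix α β F) = 0 := by
    intro α β
    rw [hdag]
    ext i j'
    simp
  -- dagger of h2
  have h2d : daggerF r A2 + B3 * daggerF r A30 + B40 * daggerF r A40 = 0 := by
    have := congrArg (daggerF r) h2
    rwa [dag_add, dag_add, dag_mul, dag_mul, dag_dag, dag_dag, dag_zero] at this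
  set M : Matrix (Fin k ⊕ Fin l) (Fin l ⊕ Fin k) F := Matrix.fromBlocks A30 A40 B3 B40 with hM
  have hMd : daggerF r M = Matrix.fromBlocks (daggerF r A30) (daggerF r B3)
      (daggerF r A40) (daggerF r B40) := by
    rw [hdag, hM, Matrix.fromBlocks_map, Matrix.fromBlocks_transpose]
    simp only [← hdag]
  -- compute M * (-dagger M) = U * L
  set U : Matrix (Fin k ⊕ Fin l) (Fin k ⊕ Fin l) F := Matrix.fromBlocks 1 A2 0 1 with hU
  set L : Matrix (Fin k ⊕ Fin l) (Fin k ⊕ Fin l) F :=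
    Matrix.fromBlocks 1 0 (daggerF r A2) 1 with hL
  have key : M * (-(daggerF r M)) = U * L := by
    rw [hMd, hM, hU, hL, Matrix.fromBlocks_neg, Matrix.fromBlocks_multiply,
      Matrix.fromBlocks_multiply]
    have h1' : (1 + A2 * daggerF r A2) + (A30 * daggerF r A30 + A40 * daggerF r A40) = 0 := by
      rw [← add_assoc]; exact h1
    have h2' : A2 + (A30 * daggerF r B3 + A40 * daggerF r B40) = 0 := by
      rw [← add_assoc]; exact h2
    have h2d' : daggerF r A2 + (B3 * daggerF r A30 + B40 * daggerF r A40) = 0 := by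
      rw [← add_assoc]; exact h2d
    have h3' : (1 : Matrix (Fin l) (Fin l) F) + (B3 * daggerF r B3 + B40 * daggerF r B40) = 0 := by
      rw [← add_assoc]; exact h3
    have e1 : A30 * -daggerF r A30 + A40 * -daggerF r A40 = 1 + A2 * daggerF r A2 := by
      simp only [Matrix.mul_neg, ← neg_add]
      exact neg_eq_of_add_eq_zero_left h1'
    have e2 : A30 * -daggerF r B3 + A40 * -daggerF r B40 = A2 := by
      simp only [Matrix.mul_neg, ← neg_add]
      exact neg_eq_of_add_eq_zero_left h2'
    have e3 : B3 * -daggerF r A30 + B40 * -daggerF r A40 = daggerF r A2 := by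
      simp only [Matrix.mul_neg, ← neg_add]
      exact neg_eq_of_add_eq_zero_left h2d'
    have e4 : B3 * -daggerF r B3 + B40 * -daggerF r B40 = 1 := by
      simp only [Matrix.mul_neg, ← neg_add]
      exact neg_eq_of_add_eq_zero_left h3'
    rw [e1, e2, e3, e4]
    congr 1 <;> simp
  -- inverses of U and L
  set U' : Matrix (Fin k ⊕ Fin l) (Fin k ⊕ Fin l) F := Matrix.fromBlocks 1 (-A2) 0 1 with hU'
  set L' : Matrix (Fin k ⊕ Fin l) (Fin k ⊕ Fin l) F :=
    Matrix.fromBlocks 1 0 (-(daggerF r A2)) 1 with hL'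
  have hLL' : L * L' = 1 := by
    rw [hL, hL', Matrix.fromBlocks_multiply, ← Matrix.fromBlocks_one]
    congr 1 <;> simp
  have hUU' : U * U' = 1 := by
    rw [hU, hU', Matrix.fromBlocks_multiply, ← Matrix.fromBlocks_one]
    congr 1 <;> simp
  -- right inverse of M
  set R : Matrix (Fin l ⊕ Fin k) (Fin k ⊕ Fin l) F := (-(daggerF r M)) * (L' * U') with hR
  have hMR : M * R = 1 := by
    calc M * R = (M * -(daggerF r M)) * (L' * U') := by rw [hR]; exact (Matrix.mul_assoc _ _ _).symm
      _ = U * L * (L' * U') := by rw [key]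
      _ = U * (L * L') * U' := by simp only [Matrix.mul_assoc]
      _ = 1 := by rw [hLL', mul_one, hUU']
  have hRM : R * M = 1 :=
    (Matrix.mul_eq_one_comm_of_equiv (Equiv.sumComm (Fin k) (Fin l))).mp hMR
  -- transfer through f
  have hHM : Matrix.fromBlocks (A30.map fun a => a ^ r) (A40.map fun a => a ^ r)
      (B3.map fun a => a ^ r) (B40.map fun a => a ^ r) = M.map f := by
    rw [hM, Matrix.fromBlocks_map, hmapf A30, hmapf A40, hmapf B3, hmapf B40]
  refine ⟨R.map f, ?_, ?_⟩
  · rw [hHM, ← Matrix.map_mul, hMR, Matrix.map_one f f.map_zero f.map_one]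
  · rw [hHM, ← Matrix.map_mul, hRM, Matrix.map_one f f.map_zero f.map_one]
end

section
/- Let q be a square and n odd. Then there are no Hermitian self-dual linear codes of length n over F_q[u]/(u^3); consequently (for q = 9^m type settings) there are no Hermitian self-dual A × Z_3-quasi-abelian codes in F_{3^m}[A × Z_3 × B] whenever |B| is odd. -/
open Polynomial

open Module Finset

lemma key_lemma {K : Type*} [Field K] [Fintype K] {V : Type*} [AddCommGroup V] [Module K V]
    [FiniteDimensional K V] [Finite V]
    (b : V →ₗ[K] V →ₗ[K] K) (hnd : ∀ v : V, (∀ w : V, b w v = 0) → v = 0)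
    (E : V → V) (hE : Function.Bijective E)
    (C : Submodule K V) (hC : ∀ v : V, v ∈ C ↔ ∀ c ∈ C, b c (E v) = 0) :
    2 * finrank K C = finrank K V := by
  classical
  -- flip map is injective hence surjective
  have hflip_inj : Function.Injective b.flip := by
    rw [← LinearMap.ker_eq_bot, LinearMap.ker_eq_bot']
    intro v hv
    exact hnd v fun w => by simpa using LinearMap.ext_iff.mp hv w
  have hflip_surj : Function.Surjective b.flip :=
    (LinearMap.injective_iff_surjective_of_finrank_eq_finrank
      (Subspace.dual_finrank_eq (K := K) (V := V)).symm).mp hflip_inj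
  set Ψ : V →ₗ[K] Module.Dual K C := C.dualRestrict.comp b.flip with hΨ
  have hΨsurj : Function.Surjective Ψ :=
    (Subspace.dualRestrict_surjective).comp hflip_surj
  have hker : ∀ v : V, v ∈ LinearMap.ker Ψ ↔ ∀ c ∈ C, b c v = 0 := by
    intro v
    constructor
    · intro h c hc
      have := congrArg (fun f => f ⟨c, hc⟩) h
      simpa [hΨ, Submodule.dualRestrict_apply] using this
    · intro h
      ext ⟨c, hc⟩
      simpa [hΨ, Submodule.dualRestrict_apply] using h c hc
  -- rank-nullity
  have hrk : finrank K (LinearMap.range Ψ) + finrank K (LinearMap.ker Ψ) = finrank K V :=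
    LinearMap.finrank_range_add_finrank_ker Ψ
  have hrange : LinearMap.range Ψ = ⊤ := LinearMap.range_eq_top.mpr hΨsurj
  have hdim : finrank K C + finrank K (LinearMap.ker Ψ) = finrank K V := by
    rw [hrange] at hrk
    rwa [finrank_top, Subspace.dual_finrank_eq] at hrk
  -- cardinalities
  have hcardeq : Nat.card C = Nat.card (LinearMap.ker Ψ) := by
    have e : C ≃ LinearMap.ker Ψ :=
      (Equiv.ofBijective E hE).subtypeEquiv (fun v => by
        rw [hC v, ← hker (E v)]; rfl)
    exact Nat.card_congr e
  haveI : Fintype V := Fintype.ofFinite V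
  haveI : Fintype C := Fintype.ofFinite C
  haveI : Fintype (LinearMap.ker Ψ) := Fintype.ofFinite _
  have hcC : Nat.card C = Fintype.card K ^ finrank K C := by
    rw [Nat.card_eq_fintype_card]; exact card_eq_pow_finrank (K := K) (V := C)
  have hcK : Nat.card (LinearMap.ker Ψ) = Fintype.card K ^ finrank K (LinearMap.ker Ψ) := by
    rw [Nat.card_eq_fintype_card]; exact card_eq_pow_finrank (K := K) (V := LinearMap.ker Ψ)
  have h2 : (2 : ℕ) ≤ Fintype.card K := Fintype.one_lt_card
  have hpow : Fintype.card K ^ finrank K C = Fintype.card K ^ finrank K (LinearMap.ker Ψ) := by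
    rw [← hcC, ← hcK, hcardeq]
  have hfr : finrank K C = finrank K (LinearMap.ker Ψ) := Nat.pow_right_injective h2 hpow
  omega

def sumForm {K R : Type*} [CommSemiring K] [CommRing R] [Algebra K R] (n : ℕ)
    (τ : R →ₗ[K] K) : (Fin n → R) →ₗ[K] ((Fin n → R) →ₗ[K] K) :=
  LinearMap.mk₂ K (fun v w => τ (∑ i, v i * w i))
    (fun v v' w => by
      simp only [Pi.add_apply, add_mul, Finset.sum_add_distrib, map_add])
    (fun c v w => by
      simp only [Pi.smul_apply, smul_mul_assoc, ← Finset.smul_sum, map_smul, smul_eq_mul])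
    (fun v w w' => by
      simp only [Pi.add_apply, mul_add, Finset.sum_add_distrib, map_add])
    (fun c v w => by
      simp only [Pi.smul_apply, mul_smul_comm, ← Finset.smul_sum, map_smul, smul_eq_mul])

section Part1
variable {F : Type*} [Field F] [Fintype F]

lemma part1 (r n : ℕ) (hr2 : 2 ≤ r)
    (hcard : Fintype.card F = r ^ 2)
    (bar : R3 F →+* R3 F)
    (hbar1 : ∀ a : F, bar (algebraMap F (R3 F) a) = algebraMap F (R3 F) (a ^ r))
    (hbar2 : bar (AdjoinRoot.root ((X : Polynomial F) ^ 3)) =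
      AdjoinRoot.root ((X : Polynomial F) ^ 3))
    (hn : Odd n) :
    ¬ ∃ C : Submodule (R3 F) (Fin n → R3 F),
      (C : Set (Fin n → R3 F)) = HdualR bar C := by
  classical
  rintro ⟨C, hCD⟩
  set f : Polynomial F := X ^ 3 with hf
  have hf0 : f ≠ 0 := pow_ne_zero _ X_ne_zero
  set u : R3 F := AdjoinRoot.root f with hu
  have hu3 : u ^ 3 = 0 := by
    rw [hu, ← AdjoinRoot.mk_X, ← map_pow]
    exact AdjoinRoot.mk_self
  -- basis 1, u, u²
  have hdim : (AdjoinRoot.powerBasis hf0).dim = 3 := by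
    simp [AdjoinRoot.powerBasis, hf]
  let bas : Basis (Fin 3) F (R3 F) := (AdjoinRoot.powerBasis hf0).basis.reindex
    (finCongr hdim)
  have hbas : ∀ i : Fin 3, bas i = u ^ (i : ℕ) := by
    intro i
    rw [show bas i = (AdjoinRoot.powerBasis hf0).basis ((finCongr hdim).symm i) from
      Module.Basis.reindex_apply _ _ i, (AdjoinRoot.powerBasis hf0).basis_eq_pow,
      AdjoinRoot.powerBasis_gen hf0]
    simp
    rfl
  haveI : FiniteDimensional F (R3 F) := Module.Finite.of_basis bas
  haveI : Finite (R3 F) := Module.finite_of_finite F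
  have hfrR : finrank F (R3 F) = 3 := by
    rw [Module.finrank_eq_card_basis bas, Fintype.card_fin]
  -- τ : coefficient of u²
  set τ : R3 F →ₗ[F] F := bas.coord 2 with hτ
  have hτpow : τ 1 = 0 ∧ τ u = 0 ∧ τ (u ^ 2) = 1 := by
    refine ⟨?_, ?_, ?_⟩
    · have := hbas 0
      simp only [Fin.val_zero, pow_zero] at this
      rw [hτ, ← this, Basis.coord_apply, Basis.repr_self]
      simp
    · have := hbas 1
      simp only [Fin.val_one, pow_one] at this
      rw [hτ, ← this, Basis.coord_apply, Basis.repr_self]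
      simp [Finsupp.single_apply]
    · have := hbas 2
      simp only [Fin.val_two] at this
      rw [hτ, ← this, Basis.coord_apply, Basis.repr_self]
      simp
  -- key injectivity property of τ
  have hu4 : u ^ 4 = 0 := by rw [pow_succ, hu3, zero_mul]
  have tau3 : ∀ x : R3 F, τ x = 0 → τ (u * x) = 0 → τ (u ^ 2 * x) = 0 → x = 0 := by
    intro x h0 h1 h2
    obtain ⟨ht0, ht1, ht2⟩ := hτpow
    have hx : x = bas.repr x 0 • (1 : R3 F) + bas.repr x 1 • u + bas.repr x 2 • u ^ 2 := by
      conv_lhs => rw [← bas.sum_repr x]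
      rw [Fin.sum_univ_three, hbas 0, hbas 1, hbas 2]
      norm_num
    set c0 := bas.repr x 0; set c1 := bas.repr x 1; set c2 := bas.repr x 2
    rw [hx] at h0 h1 h2
    have e1 : u * (c0 • (1 : R3 F) + c1 • u + c2 • u ^ 2)
        = c0 • u + c1 • u ^ 2 + c2 • u ^ 3 := by
      have r1 : u * u = u ^ 2 := by ring
      have r2 : u * u ^ 2 = u ^ 3 := by ring
      simp only [mul_add, mul_smul_comm, mul_one, r1, r2]
    have e2 : u ^ 2 * (c0 • (1 : R3 F) + c1 • u + c2 • u ^ 2)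
        = c0 • u ^ 2 + c1 • u ^ 3 + c2 • u ^ 4 := by
      have r1 : u ^ 2 * u = u ^ 3 := by ring
      have r2 : u ^ 2 * u ^ 2 = u ^ 4 := by ring
      simp only [mul_add, mul_smul_comm, mul_one, r1, r2]
    rw [e1, hu3, smul_zero, add_zero] at h1
    rw [e2, hu3, hu4, smul_zero, smul_zero, add_zero, add_zero] at h2
    simp only [map_add, map_smul, ht0, ht1, ht2, smul_eq_mul, mul_zero, mul_one,
      zero_add, add_zero] at h0 h1 h2
    rw [hx, h0, h1, h2]
    simp
  -- the bilinear form
  set V := (Fin n → R3 F) with hV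
  let b : V →ₗ[F] V →ₗ[F] F := sumForm n τ
  have hbapp : ∀ v w : V, b v w = τ (∑ i, v i * w i) := fun v w => rfl
  -- nondegeneracy
  have hsum_single : ∀ (i : Fin n) (x : R3 F) (v : V),
      (∑ i', (Pi.single i x : Fin n → R3 F) i' * v i') = x * v i := by
    intro i x v
    rw [Finset.sum_eq_single i]
    · rw [Pi.single_eq_same]
    · intro b _ hb'; rw [Pi.single_eq_of_ne hb', zero_mul]
    · intro h; exact absurd (Finset.mem_univ i) h
  have hnd : ∀ v : V, (∀ w : V, b w v = 0) → v = 0 := by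
    intro v hv
    funext i
    have h0 := hv (Pi.single i 1)
    have h1 := hv (Pi.single i u)
    have h2 := hv (Pi.single i (u ^ 2))
    rw [hbapp, hsum_single, one_mul] at h0
    rw [hbapp, hsum_single] at h1
    rw [hbapp, hsum_single] at h2
    exact tau3 (v i) h0 h1 h2
  -- bar is an involution
  have haa : ∀ a : F, (a ^ r) ^ r = a := by
    intro a
    rw [← pow_mul, ← sq, ← hcard]
    exact FiniteField.pow_card a
  have hbb : ∀ x : R3 F, bar (bar x) = x := by
    intro x
    obtain ⟨P, rfl⟩ := AdjoinRoot.mk_surjective x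
    induction P using Polynomial.induction_on with
    | C a => rw [AdjoinRoot.mk_C, ← AdjoinRoot.algebraMap_eq, hbar1, hbar1, haa]
    | add P Q hP hQ => rw [map_add, map_add, map_add, hP, hQ]
    | monomial k a _ =>
        have hroot2 : bar (bar (AdjoinRoot.root ((X : Polynomial F) ^ 3))) =
            AdjoinRoot.root ((X : Polynomial F) ^ 3) := by
          rw [show AdjoinRoot.root ((X : Polynomial F) ^ 3) = u from rfl, hbar2, hbar2]
        rw [map_mul, map_mul, map_mul, map_pow, map_pow, map_pow, AdjoinRoot.mk_C,
          AdjoinRoot.mk_X, ← AdjoinRoot.algebraMap_eq, hbar1, hbar1, haa, hroot2]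
  -- E
  set E : V → V := fun v i => bar (v i) with hE
  have hEinv : Function.Involutive E := by
    intro v; funext i; exact hbb (v i)
  -- C as F-subspace
  set CF : Submodule F V := C.restrictScalars F with hCF
  have hmemC : ∀ v : V, v ∈ C ↔ v ∈ HdualR bar C := fun v => by
    rw [← SetLike.mem_coe, hCD]
  have hC : ∀ v : V, v ∈ CF ↔ ∀ c ∈ CF, b c (E v) = 0 := by
    intro v
    rw [Submodule.restrictScalars_mem]
    constructor
    · intro hvC c hc
      rw [Submodule.restrictScalars_mem] at hc
      have := (hmemC v).mp hvC c hc
      rw [hbapp]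
      have : (∑ i, c i * E v i) = 0 := this
      rw [this, map_zero]
    · intro h
      rw [hmemC]
      intro c hc
      have key : ∀ k : ℕ, τ (u ^ k * ∑ i, c i * bar (v i)) = 0 := by
        intro k
        have hc' : (u ^ k) • c ∈ CF := by
          rw [Submodule.restrictScalars_mem]
          exact C.smul_mem _ hc
        have := h _ hc'
        rw [hbapp] at this
        rw [Finset.mul_sum]
        rw [show (∑ i, u ^ k * (c i * bar (v i))) = ∑ i, ((u ^ k) • c) i * E v i from
          Finset.sum_congr rfl fun i _ => by simp [hE, mul_assoc]]
        exact this
      have h0 := key 0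
      have h1 := key 1
      have h2 := key 2
      rw [pow_zero, one_mul] at h0
      rw [pow_one] at h1
      exact tau3 _ h0 h1 h2
  -- apply the key lemma
  haveI : FiniteDimensional F V := by infer_instance
  haveI : Finite V := by infer_instance
  have hmain := key_lemma b hnd E hEinv.bijective CF hC
  have hfrV : finrank F V = n * 3 := by
    rw [show finrank F V = finrank F (Fin n → R3 F) from rfl,
      Module.finrank_pi_fintype, Finset.sum_const, Finset.card_univ, Fintype.card_fin,
      smul_eq_mul, hfrR]
  rw [hfrV] at hmain
  obtain ⟨t, ht⟩ := hn
  omega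

end Part1

section Part2

variable (m : ℕ) (F3 : Type*) [Field F3] [Fintype F3]
  (A : Type*) [AddCommGroup A] [Fintype A]
  (B : Type*) [AddCommGroup B] [Fintype B]

local instance (R M : Type*) [Semiring R] : CoeFun (AddMonoidAlgebra R M) (fun _ => M → R) :=
  ⟨fun x => x.coeff⟩

set_option maxHeartbeats 1600000 in
lemma part2 (hF3 : Fintype.card F3 = 3 ^ (2 * m)) (hm : 1 ≤ m)
    (hA : ¬ (3 : ℕ) ∣ Fintype.card A)
    [Module (AddMonoidAlgebra F3 (A × ZMod 3))
      (AddMonoidAlgebra F3 (A × ZMod 3 × B))]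
    (hsmul : ∀ (a : AddMonoidAlgebra F3 (A × ZMod 3))
        (x : AddMonoidAlgebra F3 (A × ZMod 3 × B)),
      a • x = AddMonoidAlgebra.mapDomainRingHom F3
        ((AddMonoidHom.id A).prodMap
          ((AddMonoidHom.id (ZMod 3)).prod (0 : ZMod 3 →+ B))) a * x)
    (hB : Odd (Fintype.card B)) :
    ¬ ∃ C : Submodule (AddMonoidAlgebra F3 (A × ZMod 3))
          (AddMonoidAlgebra F3 (A × ZMod 3 × B)),
        (C : Set (AddMonoidAlgebra F3 (A × ZMod 3 × B))) =
          { v | ∀ c ∈ C, ∑ g : A × ZMod 3 × B, c g * (v g) ^ (3 ^ m) = 0 } := by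
  classical
  rintro ⟨C, hCD⟩
  set G := A × ZMod 3 × B with hG
  set S := AddMonoidAlgebra F3 G with hS
  set T := AddMonoidAlgebra F3 (A × ZMod 3) with hT
  -- characteristic 3
  haveI hfact3 : Fact (Nat.Prime 3) := ⟨by norm_num⟩
  have hchar3 : ringChar F3 = 3 := by
    have hdvd : ringChar F3 ∣ 3 ^ (2 * m) := by
      rw [← hF3]
      exact ringChar.dvd (FiniteField.cast_card_eq_zero F3)
    have hprime : (ringChar F3).Prime := CharP.char_is_prime F3 (ringChar F3)
    have h3 : ringChar F3 ∣ 3 := hprime.dvd_of_dvd_pow hdvd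
    exact (Nat.prime_dvd_prime_iff_eq hprime (by norm_num)).mp h3
  haveI hcharP : CharP F3 3 := hchar3 ▸ ringChar.charP F3
  -- the Frobenius σ
  set σ : F3 →+* F3 := iterateFrobenius F3 3 m with hσdef
  have hσ : ∀ x : F3, σ x = x ^ 3 ^ m := fun x => iterateFrobenius_def 3 m x
  have hσσ : ∀ x : F3, σ (σ x) = x := by
    intro x
    rw [hσ, hσ, ← pow_mul, ← pow_add, ← two_mul, ← hF3]
    exact FiniteField.pow_card x
  -- the idempotent e
  have hcardA0 : (Fintype.card A : F3) ≠ 0 := by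
    rw [Ne, CharP.cast_eq_zero_iff F3 3]
    exact hA
  set κ : F3 := (Fintype.card A : F3)⁻¹ with hκdef
  have hκcard : (Fintype.card A : F3) * κ = 1 := mul_inv_cancel₀ hcardA0
  set e : S := ∑ a : A, AddMonoidAlgebra.single ((a, 0, 0) : G) κ with hedef
  -- pointwise formula for e * w
  have hEmul : ∀ (w : S) (a : A) (z : ZMod 3) (y : B),
      (e * w) (a, z, y) = κ * ∑ a' : A, w (a', z, y) := by
    intro w a z y
    rw [hedef, Finset.sum_mul]
    rw [show ((∑ a' : A, AddMonoidAlgebra.single ((a', 0, 0) : G) κ * w) (a, z, y))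
      = ∑ a' : A, (AddMonoidAlgebra.single ((a', 0, 0) : G) κ * w) (a, z, y) from
      by rw [AddMonoidAlgebra.coeff_sum, Finsupp.finset_sum_apply]]
    have h1 : ∀ a' : A, (AddMonoidAlgebra.single ((a', 0, 0) : G) κ * w) (a, z, y)
        = κ * w (a - a', z, y) := by
      intro a'
      rw [AddMonoidAlgebra.coeff_single_mul_apply]
      congr 2
      simp [Prod.ext_iff, sub_eq_neg_add]
    rw [Finset.sum_congr rfl fun a' _ => h1 a', ← Finset.mul_sum]
    congr 1
    exact Fintype.sum_equiv (Equiv.subLeft a) _ _ (fun a' => rfl)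
  -- the submodule U = e * S
  set U : Submodule F3 S := LinearMap.range (LinearMap.mulLeft F3 e) with hUdef
  have hmemU : ∀ x : S, x ∈ U ↔ ∀ (a : A) (z : ZMod 3) (y : B), x (a, z, y) = x (0, z, y) := by
    intro x
    constructor
    · rintro ⟨w, rfl⟩ a z y
      rw [LinearMap.mulLeft_apply, hEmul, hEmul]
    · intro hconst
      refine ⟨x, ?_⟩
      rw [LinearMap.mulLeft_apply]
      ext g
      obtain ⟨a, z, y⟩ := g
      rw [hEmul]
      rw [Finset.sum_congr rfl fun a' _ => hconst a' z y]
      rw [Finset.sum_const, Finset.card_univ, nsmul_eq_mul, ← mul_assoc, hκdef]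
      rw [inv_mul_cancel₀ hcardA0, one_mul, hconst a z y]
  have hfix : ∀ x : S, x ∈ U → e * x = x := by
    intro x hx
    have hconst := (hmemU x).mp hx
    ext g
    obtain ⟨a, z, y⟩ := g
    rw [hEmul, Finset.sum_congr rfl fun a' _ => hconst a' z y, Finset.sum_const,
      Finset.card_univ, nsmul_eq_mul, ← mul_assoc, hκdef, inv_mul_cancel₀ hcardA0, one_mul,
      hconst a z y]
  have hmulU : ∀ x : S, e * x ∈ U := fun x => ⟨x, rfl⟩
  -- e * c ∈ C for c ∈ C
  have heC : ∀ c : S, c ∈ C → e * c ∈ C := by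
    intro c hc
    have ht := hsmul (∑ a : A, AddMonoidAlgebra.single ((a, 0) : A × ZMod 3) κ) c
    have hmap : AddMonoidAlgebra.mapDomainRingHom F3
        ((AddMonoidHom.id A).prodMap ((AddMonoidHom.id (ZMod 3)).prod (0 : ZMod 3 →+ B)))
        (∑ a : A, AddMonoidAlgebra.single ((a, 0) : A × ZMod 3) κ) = e := by
      rw [map_sum, hedef]
      refine Finset.sum_congr rfl fun a _ => ?_
      rw [show (AddMonoidAlgebra.mapDomainRingHom F3
        ((AddMonoidHom.id A).prodMap ((AddMonoidHom.id (ZMod 3)).prod (0 : ZMod 3 →+ B))))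
        (AddMonoidAlgebra.single ((a, 0) : A × ZMod 3) κ)
        = AddMonoidAlgebra.mapDomain _ (AddMonoidAlgebra.single ((a, 0) : A × ZMod 3) κ) from rfl]
      rw [AddMonoidAlgebra.mapDomain_single]
      rfl
    rw [hmap] at ht
    rw [← ht]
    exact C.smul_mem _ hc
  -- C is an F3-subspace
  have hsmulF3 : ∀ (a : F3) (x : S), x ∈ C → a • x ∈ C := by
    intro a x hx
    have ht := hsmul (AddMonoidAlgebra.single (0 : A × ZMod 3) a) x
    have hmap : AddMonoidAlgebra.mapDomainRingHom F3
        ((AddMonoidHom.id A).prodMap ((AddMonoidHom.id (ZMod 3)).prod (0 : ZMod 3 →+ B)))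
        (AddMonoidAlgebra.single (0 : A × ZMod 3) a)
        = AddMonoidAlgebra.single (0 : G) a := by
      rw [show (AddMonoidAlgebra.mapDomainRingHom F3
        ((AddMonoidHom.id A).prodMap ((AddMonoidHom.id (ZMod 3)).prod (0 : ZMod 3 →+ B))))
        (AddMonoidAlgebra.single (0 : A × ZMod 3) a)
        = AddMonoidAlgebra.mapDomain _ (AddMonoidAlgebra.single (0 : A × ZMod 3) a) from rfl]
      rw [AddMonoidAlgebra.mapDomain_single]
      rfl
    rw [hmap] at ht
    have hsm : AddMonoidAlgebra.single (0 : G) a * x = a • x := by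
      ext g
      rw [AddMonoidAlgebra.coeff_single_mul_apply, neg_zero, zero_add, AddMonoidAlgebra.coeff_smul_apply,
        smul_eq_mul]
    rw [hsm] at ht
    rw [← ht]
    exact C.smul_mem _ hx
  set CF : Submodule F3 S :=
    { carrier := (C : Set S)
      add_mem' := fun h1 h2 => C.add_mem h1 h2
      zero_mem' := C.zero_mem
      smul_mem' := fun a x hx => hsmulF3 a x hx } with hCFdef
  have hmemCF : ∀ x : S, x ∈ CF ↔ x ∈ C := fun x => Iff.rfl
  -- the bilinear form on S
  set bS : S →ₗ[F3] S →ₗ[F3] F3 := LinearMap.mk₂ F3 (fun v w => ∑ g : G, v g * w g)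
    (fun v v' w => by
      rw [show (∑ g : G, (v + v') g * w g) = ∑ g : G, (v g * w g + v' g * w g) from
        Finset.sum_congr rfl fun g _ => by
          rw [show (v + v') g = v g + v' g from rfl, add_mul],
        Finset.sum_add_distrib])
    (fun c v w => by
      rw [smul_eq_mul, Finset.mul_sum]
      exact Finset.sum_congr rfl fun g _ => by
        rw [show (c • v) g = c * v g from rfl, mul_assoc])
    (fun v w w' => by
      rw [show (∑ g : G, v g * (w + w') g) = ∑ g : G, (v g * w g + v g * w' g) from
        Finset.sum_congr rfl fun g _ => by
          rw [show (w + w') g = w g + w' g from rfl, mul_add],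
        Finset.sum_add_distrib])
    (fun c v w => by
      rw [smul_eq_mul, Finset.mul_sum]
      exact Finset.sum_congr rfl fun g _ => by
        rw [show (c • w) g = c * w g from rfl]; ring) with hbSdef
  have hbSapp : ∀ v w : S, bS v w = ∑ g : G, v g * w g := fun v w => rfl
  -- nondegeneracy of bS on S
  have hndS : ∀ y : S, (∀ w : S, bS w y = 0) → y = 0 := by
    intro y hy
    ext g
    have := hy (AddMonoidAlgebra.single g 1)
    rw [hbSapp, Finset.sum_eq_single g] at this
    · rw [AddMonoidAlgebra.coeff_single, Finsupp.single_eq_same, one_mul] at this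
      exact this
    · intro g' _ hg'
      rw [AddMonoidAlgebra.coeff_single, Finsupp.single_eq_of_ne hg', zero_mul]
    · intro hg
      exact absurd (Finset.mem_univ g) hg
  -- adjoint identity
  have hadj : ∀ w y : S, bS (e * w) y = bS w (e * y) := by
    intro w y
    rw [hbSapp, hbSapp]
    rw [show (∑ g : G, (e * w) g * y g)
        = ∑ p : A × (ZMod 3 × B), (e * w) (p.1, p.2.1, p.2.2) * y (p.1, p.2.1, p.2.2) from
      Finset.sum_congr rfl fun p _ => rfl]
    rw [show (∑ g : G, w g * (e * y) g)
        = ∑ p : A × (ZMod 3 × B), w (p.1, p.2.1, p.2.2) * (e * y) (p.1, p.2.1, p.2.2) from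
      Finset.sum_congr rfl fun p _ => rfl]
    rw [Fintype.sum_prod_type, Fintype.sum_prod_type]
    have l1 : ∀ (a : A) (q : ZMod 3 × B),
        (e * w) (a, q.1, q.2) * y (a, q.1, q.2)
        = κ * ((∑ a' : A, w (a', q.1, q.2)) * y (a, q.1, q.2)) := by
      intro a q
      rw [hEmul, mul_assoc]
    have l2 : ∀ (a : A) (q : ZMod 3 × B),
        w (a, q.1, q.2) * (e * y) (a, q.1, q.2)
        = κ * (w (a, q.1, q.2) * ∑ a' : A, y (a', q.1, q.2)) := by
      intro a q
      rw [hEmul]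
      ring
    calc (∑ a : A, ∑ q : ZMod 3 × B, (e * w) (a, q.1, q.2) * y (a, q.1, q.2))
        = ∑ a : A, ∑ q : ZMod 3 × B,
            κ * ((∑ a' : A, w (a', q.1, q.2)) * y (a, q.1, q.2)) :=
          Finset.sum_congr rfl fun a _ => Finset.sum_congr rfl fun q _ => l1 a q
      _ = ∑ q : ZMod 3 × B,
            κ * ((∑ a' : A, w (a', q.1, q.2)) * (∑ a : A, y (a, q.1, q.2))) := by
          rw [Finset.sum_comm]
          refine Finset.sum_congr rfl fun q _ => ?_
          rw [← Finset.mul_sum]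
          congr 1
          rw [← Finset.mul_sum]
      _ = ∑ a : A, ∑ q : ZMod 3 × B,
            κ * (w (a, q.1, q.2) * ∑ a' : A, y (a', q.1, q.2)) := by
          rw [Finset.sum_comm]
          refine Finset.sum_congr rfl fun q _ => Eq.symm ?_
          rw [← Finset.mul_sum]
          congr 1
          rw [← Finset.sum_mul]
      _ = ∑ a : A, ∑ q : ZMod 3 × B, w (a, q.1, q.2) * (e * y) (a, q.1, q.2) :=
          Finset.sum_congr rfl fun a _ => Finset.sum_congr rfl fun q _ => (l2 a q).symm
  -- the Frobenius map on S
  set Efull : S → S := fun v => AddMonoidAlgebra.ofCoeff (Finsupp.mapRange (fun x => σ x) (map_zero σ) v.coeff) with hEfulldef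
  have hEapp : ∀ (v : S) (g : G), Efull v g = σ (v g) := fun v g => Finsupp.mapRange_apply (hf := map_zero σ)
  have hEinv : Function.Involutive Efull := by
    intro v
    ext g
    rw [hEapp, hEapp, hσσ]
  have hEU : ∀ x : S, x ∈ U → Efull x ∈ U := by
    intro x hx
    rw [hmemU] at hx ⊢
    intro a z y
    rw [hEapp, hEapp, hx a z y]
  -- basis vectors of U
  set uvec : ZMod 3 × B → S :=
    fun p => ∑ a : A, AddMonoidAlgebra.single ((a, p.1, p.2) : G) 1 with huvecdef
  have huapp : ∀ (p : ZMod 3 × B) (a : A) (q : ZMod 3 × B),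
      uvec p (a, q.1, q.2) = if p = q then 1 else 0 := by
    intro p a q
    rw [huvecdef]
    rw [show ((∑ a' : A, AddMonoidAlgebra.single ((a', p.1, p.2) : G) (1 : F3)) (a, q.1, q.2))
      = ∑ a' : A, (AddMonoidAlgebra.single ((a', p.1, p.2) : G) (1 : F3)) (a, q.1, q.2) from
      by rw [AddMonoidAlgebra.coeff_sum, Finsupp.finset_sum_apply]]
    have h1 : ∀ a' : A, (AddMonoidAlgebra.single ((a', p.1, p.2) : G) (1 : F3)) (a, q.1, q.2)
        = if a' = a ∧ p = q then 1 else 0 := by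
      intro a'
      rw [AddMonoidAlgebra.coeff_single, Finsupp.single_apply]
      congr 1
      simp only [Prod.mk.injEq, Prod.ext_iff, eq_iff_iff]
    rw [Finset.sum_congr rfl fun a' _ => h1 a']
    rw [Finset.sum_eq_single a]
    · by_cases hpq : p = q <;> simp [hpq]
    · intro a' _ ha'
      simp [ha']
    · intro h
      exact absurd (Finset.mem_univ a) h
  have huU : ∀ p : ZMod 3 × B, uvec p ∈ U := by
    intro p
    rw [hmemU]
    intro a z y
    rw [show ((a, z, y) : G) = (a, (z, y).1, (z, y).2) from rfl, huapp,
      show ((0, z, y) : G) = ((0 : A), (z, y).1, (z, y).2) from rfl, huapp]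
  have hx_expand : ∀ x : S, x ∈ U → x = ∑ p : ZMod 3 × B, x (0, p.1, p.2) • uvec p := by
    intro x hx
    have hconst := (hmemU x).mp hx
    ext g
    obtain ⟨a, z, y⟩ := g
    rw [show ((∑ p : ZMod 3 × B, x (0, p.1, p.2) • uvec p) (a, z, y))
      = ∑ p : ZMod 3 × B, (x (0, p.1, p.2) • uvec p) (a, z, y) from
      by rw [AddMonoidAlgebra.coeff_sum, Finsupp.finset_sum_apply]]
    have h1 : ∀ p : ZMod 3 × B, (x (0, p.1, p.2) • uvec p) (a, z, y)
        = if p = (z, y) then x (0, p.1, p.2) else 0 := by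
      intro p
      rw [show (x (0, p.1, p.2) • uvec p) (a, z, y) = x (0, p.1, p.2) * uvec p (a, z, y) from rfl]
      rw [show ((a, z, y) : G) = (a, (z, y).1, (z, y).2) from rfl, huapp, mul_ite, mul_one,
        mul_zero]
    rw [Finset.sum_congr rfl fun p _ => h1 p, Finset.sum_ite_eq' Finset.univ ((z, y) : ZMod 3 × B)]
    simp [hconst a z y]
  have hspanU : U = Submodule.span F3 (Set.range uvec) := by
    apply le_antisymm
    · intro x hx
      rw [hx_expand x hx]
      exact Submodule.sum_mem _ fun p _ =>
        Submodule.smul_mem _ _ (Submodule.subset_span ⟨p, rfl⟩)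
    · rw [Submodule.span_le]
      rintro _ ⟨p, rfl⟩
      exact huU p
  have hli : LinearIndependent F3 uvec := by
    rw [Fintype.linearIndependent_iff]
    intro g hg p
    have := congrArg (fun s : S => s ((0 : A), p.1, p.2)) hg
    rw [show ((∑ q : ZMod 3 × B, g q • uvec q) ((0 : A), p.1, p.2))
      = ∑ q : ZMod 3 × B, (g q • uvec q) ((0 : A), p.1, p.2) from
      by rw [AddMonoidAlgebra.coeff_sum, Finsupp.finset_sum_apply]] at this
    have h1 : ∀ q : ZMod 3 × B, (g q • uvec q) ((0 : A), p.1, p.2)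
        = if q = p then g q else 0 := by
      intro q
      rw [show (g q • uvec q) ((0 : A), p.1, p.2) = g q * uvec q ((0 : A), p.1, p.2) from rfl]
      rw [show (((0 : A), p.1, p.2) : G) = ((0 : A), p.1, p.2) from rfl, huapp, mul_ite, mul_one,
        mul_zero]
    rw [Finset.sum_congr rfl fun q _ => h1 q, Finset.sum_ite_eq' Finset.univ p] at this
    simp only [Finset.mem_univ, if_true] at this
    rw [this]
    rfl
  haveI hfdU : FiniteDimensional F3 ↥U := by
    rw [hspanU]
    exact FiniteDimensional.span_of_finite F3 (Set.finite_range uvec)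
  haveI hfinS : Finite S := Finite.of_injective (fun (s : S) (g : G) => s g)
    (fun s t h => AddMonoidAlgebra.coeff_injective (Finsupp.ext fun g => congrFun h g))
  haveI hfinU : Finite ↥U := Subtype.finite
  have hfrU : finrank F3 ↥U = 3 * Fintype.card B := by
    rw [hspanU, finrank_span_eq_card hli, Fintype.card_prod, ZMod.card]
  -- restricted bilinear form
  set bU : ↥U →ₗ[F3] ↥U →ₗ[F3] F3 := LinearMap.compl₁₂ bS U.subtype U.subtype with hbUdef
  have hbUapp : ∀ x y : ↥U, bU x y = bS (x : S) (y : S) := fun x y => rfl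
  have hndU : ∀ y : ↥U, (∀ w : ↥U, bU w y = 0) → y = 0 := by
    intro y hy
    have : (y : S) = 0 := by
      apply hndS
      intro w
      calc bS w (y : S) = bS w (e * (y : S)) := by rw [hfix _ y.2]
        _ = bS (e * w) (y : S) := (hadj w (y : S)).symm
        _ = bU ⟨e * w, hmulU w⟩ y := rfl
        _ = 0 := hy _
    exact Subtype.ext this
  -- E on U
  set EU : ↥U → ↥U := fun x => ⟨Efull (x : S), hEU _ x.2⟩ with hEUdef
  have hEUinv : Function.Involutive EU := by
    intro x
    apply Subtype.ext
    exact hEinv (x : S)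
  -- the code inside U
  set D' : Submodule F3 ↥U := Submodule.comap U.subtype CF with hD'def
  have hmemD' : ∀ v : ↥U, v ∈ D' ↔ (v : S) ∈ C := fun v => Iff.rfl
  have hdualmem : ∀ x : S, x ∈ C ↔ ∀ c ∈ C, ∑ g : G, c g * (x g) ^ (3 ^ m) = 0 := by
    intro x
    rw [← SetLike.mem_coe, hCD]
    exact Iff.rfl
  have hCcond : ∀ v : ↥U, v ∈ D' ↔ ∀ c ∈ D', bU c (EU v) = 0 := by
    intro v
    constructor
    · intro hv c hc
      rw [hbUapp, hEUdef]
      rw [show bS (c : S) (Efull (v : S)) = ∑ g : G, (c : S) g * σ ((v : S) g) from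
        Finset.sum_congr rfl fun g _ => by rw [hEapp]]
      rw [show (∑ g : G, (c : S) g * σ ((v : S) g))
          = ∑ g : G, (c : S) g * ((v : S) g) ^ (3 ^ m) from
        Finset.sum_congr rfl fun g _ => by rw [hσ]]
      exact (hdualmem (v : S)).mp ((hmemD' v).mp hv) (c : S) ((hmemD' c).mp hc)
    · intro h
      rw [hmemD', hdualmem]
      intro c hc
      have hcU : e * c ∈ C := heC c hc
      have hstep : ∑ g : G, c g * ((v : S) g) ^ (3 ^ m) = bU ⟨e * c, hmulU c⟩ (EU v) := by
        rw [hbUapp, hEUdef]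
        calc ∑ g : G, c g * ((v : S) g) ^ (3 ^ m)
            = ∑ g : G, c g * (Efull (v : S)) g :=
              Finset.sum_congr rfl fun g _ => by rw [hEapp, hσ]
          _ = bS c (Efull (v : S)) := rfl
          _ = bS c (e * Efull (v : S)) := by rw [hfix _ (hEU _ v.2)]
          _ = bS (e * c) (Efull (v : S)) := (hadj c (Efull (v : S))).symm
      rw [hstep]
      exact h ⟨e * c, hmulU c⟩ ((hmemD' _).mpr hcU)
  -- apply the key lemma
  have hmain := key_lemma bU hndU EU hEUinv.bijective D' hCcond
  rw [hfrU] at hmain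
  obtain ⟨t, ht⟩ := hB
  omega

end Part2

/-- Let `q = r^2` be a square and `n` odd.  Then there are no Hermitian
self-dual linear codes of length `n` over `F_q[u]/(u^3)`; consequently, for
`F_{3^{2m}}` (so that the Hermitian conjugation is `a ↦ a^{3^m}`), there are no
Hermitian self-dual `A × Z_3`-quasi-abelian codes in `F_{3^{2m}}[A × Z_3 × B]`
whenever `|B|` is odd. -/
theorem stmt_19 (p j r n : ℕ) (hp : p.Prime) (hj : 1 ≤ j) (hr : r = p ^ j)
    (F : Type*) [Field F] [Fintype F] (hcard : Fintype.card F = r ^ 2)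
    (bar : R3 F →+* R3 F)
    (hbar1 : ∀ a : F, bar (algebraMap F (R3 F) a) = algebraMap F (R3 F) (a ^ r))
    (hbar2 : bar (AdjoinRoot.root ((X : Polynomial F) ^ 3)) =
      AdjoinRoot.root ((X : Polynomial F) ^ 3))
    (m : ℕ) (hm : 1 ≤ m)
    (F3 : Type*) [Field F3] [Fintype F3] (hF3 : Fintype.card F3 = 3 ^ (2 * m))
    (A : Type*) [AddCommGroup A] [Fintype A] (hA : ¬ (3 : ℕ) ∣ Fintype.card A)
    (B : Type*) [AddCommGroup B] [Fintype B]
    [Module (AddMonoidAlgebra F3 (A × ZMod 3))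
      (AddMonoidAlgebra F3 (A × ZMod 3 × B))]
    (hsmul : ∀ (a : AddMonoidAlgebra F3 (A × ZMod 3))
        (x : AddMonoidAlgebra F3 (A × ZMod 3 × B)),
      a • x = AddMonoidAlgebra.mapDomainRingHom F3
        ((AddMonoidHom.id A).prodMap
          ((AddMonoidHom.id (ZMod 3)).prod (0 : ZMod 3 →+ B))) a * x) :
    (Odd n → ¬ ∃ C : Submodule (R3 F) (Fin n → R3 F),
      (C : Set (Fin n → R3 F)) = HdualR bar C) ∧
    (Odd (Fintype.card B) →
      ¬ ∃ C : Submodule (AddMonoidAlgebra F3 (A × ZMod 3))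
          (AddMonoidAlgebra F3 (A × ZMod 3 × B)),
        (C : Set (AddMonoidAlgebra F3 (A × ZMod 3 × B))) =
          { v | ∀ c ∈ C, ∑ g : A × ZMod 3 × B, c.coeff g * (v.coeff g) ^ (3 ^ m) = 0 }) := by
  have hr2 : 2 ≤ r := by
    rw [hr]
    calc 2 ≤ p := hp.two_le
      _ ≤ p ^ j := Nat.le_self_pow (by omega) p
  constructor
  · intro hn
    exact part1 r n hr2 hcard bar hbar1 hbar2 hn
  · intro hB
    exact part2 m F3 A B hF3 hm hA hsmul hB
end
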